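/- In the N-player public goods game with tax contract parameter θ ∈ [0,1.2], where each player i who invests a_i pays a tax θ·(1−a_i) distributed evenly among the other N−1 players, if θ > 1 − 1.2/N then investing a_i = 1 strictly dominates every a_i < 1 for each player in the contract-modified game. -/
import Mathlib


open Finset

/-- Contract-modified payoff in the N-player public goods game with tax parameter θ:
each player pays a tax θ(1 - a_i), redistributed evenly among the other N-1 players. -/
noncomputable def Rtax {N : ℕ} (θ : ℝ) (i : Fin N) (a : Fin N → ℝ) : ℝ :=
  1.2 * (∑ j, a j) / N - a i - θ * (1 - a i)
    + ∑ j ∈ univ.erase i, θ * (1 - a j) / (N - 1)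

/-- If θ > 1 - 1.2/N, then investing 1 strictly dominates every smaller investment
in the tax-contract-modified public goods game. -/
theorem stmt_6 {N : ℕ} (hN : 2 ≤ N) (θ : ℝ) (hθ0 : 0 ≤ θ) (hθ1 : θ ≤ 1.2)
    (hθ : 1 - 1.2 / N < θ) :
    ∀ i : Fin N, ∀ a : Fin N → ℝ, (∀ j, a j ∈ Set.Icc (0:ℝ) 1) → a i < 1 →
      Rtax θ i a < Rtax θ i (Function.update a i 1) := by
  intro i a _ hai
  have hN0 : (0:ℝ) < N := by positivity
  have hsum : ∑ j, Function.update a i 1 j = (∑ j, a j) + (1 - a i) := by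
    rw [Finset.sum_update_of_mem (Finset.mem_univ i)]
    rw [← Finset.add_sum_erase _ a (Finset.mem_univ i), ← Finset.sdiff_singleton_eq_erase]
    ring
  have htax : ∑ j ∈ univ.erase i, θ * (1 - Function.update a i 1 j) / (N - 1)
      = ∑ j ∈ univ.erase i, θ * (1 - a j) / (N - 1) := by
    apply Finset.sum_congr rfl
    intro j hj
    rw [Function.update_of_ne (Finset.ne_of_mem_erase hj)]
  unfold Rtax
  rw [hsum, htax, Function.update_self]
  have key : 1.2 / (N:ℝ) > 1 - θ := by linarith
  have hd : 0 < 1 - a i := by linarith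
  have h2 : 1.2 * (1 - a i) / N > (1 - θ) * (1 - a i) := by
    have e : 1.2 * (1 - a i) / N = (1.2 / N) * (1 - a i) := by ring
    rw [e]
    exact mul_lt_mul_of_pos_right key hd
  have : 1.2 * ((∑ j, a j) + (1 - a i)) / N = 1.2 * (∑ j, a j) / N + 1.2 * (1 - a i) / N := by
    ring
  rw [this]
  nlinarith [h2]
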